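/- For all integers λ1, λ2, β1, β2 with λ1 ≥ 0, λ2 ≥ 0, −λ1 − 2λ2 + β1 ≥ 0, −λ1 + β1 − β2 ≥ 0, 2λ1 + 2λ2 − β1 ≥ 0 and −λ1 − λ2 + β2 ≥ 0, one has N(λ1, λ2, β1, β2) = 7/8 + λ2² + λ1² + 2λ1λ2 + 2λ2 + 2λ1 − β1 + (1/4)β1² − λ2β1 − λ1β1 + (1/8)(−1)^{β1}. -/

import Mathlib

open Finset

private lemma tri1 (n : ℕ) (a : ℤ) :
    2 * ∑ y ∈ Finset.Ioc (a-1) (a-1+(n:ℤ)), (y - a + 1).toNat = n*(n+1) := by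
  induction n with
  | zero => simp
  | succ m ih =>
      have h : a - 1 ≤ a - 1 + (m:ℤ) := by omega
      rw [show ((m+1 : ℕ):ℤ) = ((m:ℤ)+1) by push_cast; ring, show a - 1 + ((m:ℤ)+1) = (a-1+(m:ℤ))+1 by ring]
      rw [← Finset.Ioc_union_Ioc_eq_Ioc h (by omega : a - 1 + (m:ℤ) ≤ a - 1 + (m:ℤ) + 1)]
      rw [Finset.sum_union (by
        rw [Finset.disjoint_left]
        intro z hz hz'
        simp only [Finset.mem_Ioc] at hz hz'
        omega)]
      rw [show Finset.Ioc (a-1+(m:ℤ)) (a-1+(m:ℤ)+1) = {a-1+(m:ℤ)+1} by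
        ext z; simp [Finset.mem_Ioc]; omega]
      rw [Finset.sum_singleton, Nat.mul_add, ih]
      have : (a - 1 + (m:ℤ) + 1 - a + 1).toNat = m + 1 := by omega
      rw [this]; ring

private lemma tri2 (n : ℕ) (a : ℤ) :
    2 * ∑ y ∈ Finset.Ioc a (a+(n:ℤ)), (a + (n:ℤ) - y + 1).toNat = n*(n+1) := by
  have h := tri1 n (a+1)
  rw [show (a+1-1 : ℤ) = a by ring] at h
  rw [← h]
  congr 1
  refine Finset.sum_nbij' (fun y => 2*a+(n:ℤ)+1-y) (fun y => 2*a+(n:ℤ)+1-y) ?_ ?_ ?_ ?_ ?_ <;>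
    · intro y hy
      simp only [Finset.mem_Ioc] at *
      omega

/-- The number of quadruples `(a22, a11, a12, a13)` of nonnegative integers satisfying
Littelmann's inequalities for `so₅(ℂ)` together with the weight equations
`a22 + a12 = β1` and `a11 + a13 = β2`.  By Littelmann's results this is the dimension of
the weight space of weight `λ1·ω1 + λ2·ω2 − β1·α1 − β2·α2` in the irreducible
`so₅(ℂ)`-module of highest weight `λ1·ω1 + λ2·ω2`. -/
noncomputable def weightMult (l1 l2 b1 b2 : ℤ) : ℕ :=
  Set.ncard {a : ℤ × ℤ × ℤ × ℤ |
    0 ≤ a.1 ∧ 0 ≤ a.2.1 ∧ 0 ≤ a.2.2.1 ∧ 0 ≤ a.2.2.2 ∧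
    2 * a.2.1 ≥ a.2.2.1 ∧
    a.2.2.1 ≥ 2 * a.2.2.2 ∧
    a.2.2.2 ≤ l2 ∧
    a.2.2.1 ≤ l1 + 2 * a.2.2.2 ∧
    a.2.1 ≤ l2 + a.2.2.1 - 2 * a.2.2.2 ∧
    a.1 ≤ l1 + 2 * a.2.1 - 2 * a.2.2.1 + 2 * a.2.2.2 ∧
    a.1 + a.2.2.1 = b1 ∧
    a.2.1 + a.2.2.2 = b2}

theorem weightMult_on_cone_f31 (l1 l2 b1 b2 : ℤ)
    (h0 : 0 ≤ l1)
    (h1 : 0 ≤ l2)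
    (h2 : 0 ≤ -l1 - 2*l2 + b1)
    (h3 : 0 ≤ -l1 + b1 - b2)
    (h4 : 0 ≤ 2*l1 + 2*l2 - b1)
    (h5 : 0 ≤ -l1 - l2 + b2) :
    (weightMult l1 l2 b1 b2 : ℚ) = 7/8 + l2^2 + l1^2 + 2*l1*l2 + 2*l2 + 2*l1 - b1 + (1/4)*b1^2 - l2*b1 - l1*b1 + (1/8)*(-1 : ℚ)^b1 := by
  -- the Finset of solutions, parametrized by (a12, a13) = (x, y)
  set G : Finset (ℤ × ℤ × ℤ × ℤ) :=
    (Finset.Icc 0 l2).biUnion (fun y =>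
      (Finset.Icc (max (2*y) (b2 - l2 + y)) (min (l1 + 2*y) (l1 + 2*b2 - b1))).map
        ⟨fun x => (b1 - x, b2 - y, x, y),
         show Function.Injective _ from fun u v h => by simpa using congrArg (fun p => p.2.2.1) h⟩) with hG
  have hSG : weightMult l1 l2 b1 b2 = G.card := by
    rw [weightMult, ← Set.ncard_coe_finset G]
    congr 1
    ext ⟨a22, a11, a12, a13⟩
    simp only [Set.mem_setOf_eq, Finset.mem_coe, hG, Finset.mem_biUnion, Finset.mem_map,
      Finset.mem_Icc, Function.Embedding.coeFn_mk, Prod.mk.injEq]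
    constructor
    · rintro ⟨c1, c2, c3, c4, c5, c6, c7, c8, c9, c10, c11, c12⟩
      exact ⟨a13, ⟨by omega, by omega⟩, a12, ⟨by omega, by omega⟩, by omega, by omega, rfl, rfl⟩
    · rintro ⟨y, hy, x, hx, e1, e2, rfl, rfl⟩
      refine ⟨by omega, by omega, by omega, by omega, by omega, by omega, by omega, by omega,
        by omega, by omega, by omega, by omega⟩
  -- card as a sum of interval lengths
  have hcardsum : G.card = ∑ y ∈ Finset.Icc (0:ℤ) l2,
      (min (l1 + 2*y) (l1 + 2*b2 - b1) + 1 - max (2*y) (b2 - l2 + y)).toNat := by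
    rw [hG, Finset.card_biUnion]
    · refine Finset.sum_congr rfl fun y _ => ?_
      rw [Finset.card_map, Int.card_Icc]
    · intro y1 _ y2 _ hne
      rw [Function.onFun, Finset.disjoint_left]
      rintro a ha1 ha2
      simp only [Finset.mem_map, Function.Embedding.coeFn_mk] at ha1 ha2
      obtain ⟨x1, _, rfl⟩ := ha1
      obtain ⟨x2, _, h⟩ := ha2
      apply hne
      have h4 := congrArg (fun p : ℤ × ℤ × ℤ × ℤ => p.2.2.2) h
      simpa using h4.symm
  set d : ℤ := b2 - l2 - l1 with hd
  set k : ℤ := b2 - (b1+1)/2 with hk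
  set e : ℤ := l1 + l2 + b2 - b1 with he
  set n1 : ℕ := (k - d + 1).toNat with hn1
  set n2 : ℕ := (e - k).toNat with hn2
  have key : 2 * weightMult l1 l2 b1 b2 = n1*(n1+1) + n2*(n2+1) := by
    rw [hSG, hcardsum]
    have hIcc : Finset.Icc (0:ℤ) l2 = Finset.Ioc (-1 : ℤ) l2 := by
      ext z; simp only [Finset.mem_Icc, Finset.mem_Ioc]; omega
    rw [hIcc]
    rw [← Finset.Ioc_union_Ioc_eq_Ioc (show (-1:ℤ) ≤ e by omega) (show e ≤ l2 by omega),
        ← Finset.Ioc_union_Ioc_eq_Ioc (show (-1:ℤ) ≤ k by omega) (show k ≤ e by omega),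
        ← Finset.Ioc_union_Ioc_eq_Ioc (show (-1:ℤ) ≤ d-1 by omega) (show d-1 ≤ k by omega)]
    rw [Finset.sum_union (by
          rw [Finset.disjoint_left]; intro z hz hz'
          simp only [Finset.mem_Ioc, Finset.mem_union] at hz hz'; omega),
        Finset.sum_union (by
          rw [Finset.disjoint_left]; intro z hz hz'
          simp only [Finset.mem_Ioc, Finset.mem_union] at hz hz'; omega),
        Finset.sum_union (by
          rw [Finset.disjoint_left]; intro z hz hz'
          simp only [Finset.mem_Ioc] at hz hz'; omega)]
    have hS1 : ∑ y ∈ Finset.Ioc (-1:ℤ) (d-1),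
        (min (l1 + 2*y) (l1 + 2*b2 - b1) + 1 - max (2*y) (b2 - l2 + y)).toNat = 0 := by
      refine Finset.sum_eq_zero fun y hy => ?_
      simp only [Finset.mem_Ioc] at hy
      omega
    have hS4 : ∑ y ∈ Finset.Ioc e l2,
        (min (l1 + 2*y) (l1 + 2*b2 - b1) + 1 - max (2*y) (b2 - l2 + y)).toNat = 0 := by
      refine Finset.sum_eq_zero fun y hy => ?_
      simp only [Finset.mem_Ioc] at hy
      omega
    have hS2 : 2 * ∑ y ∈ Finset.Ioc (d-1) k,
        (min (l1 + 2*y) (l1 + 2*b2 - b1) + 1 - max (2*y) (b2 - l2 + y)).toNat = n1*(n1+1) := by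
      have hrw : ∀ y ∈ Finset.Ioc (d-1) k,
          (min (l1 + 2*y) (l1 + 2*b2 - b1) + 1 - max (2*y) (b2 - l2 + y)).toNat
            = (y - d + 1).toNat := by
        intro y hy
        simp only [Finset.mem_Ioc] at hy
        omega
      rw [Finset.sum_congr rfl hrw, show k = (d - 1) + (n1 : ℤ) by omega]
      exact tri1 n1 d
    have hS3 : 2 * ∑ y ∈ Finset.Ioc k e,
        (min (l1 + 2*y) (l1 + 2*b2 - b1) + 1 - max (2*y) (b2 - l2 + y)).toNat = n2*(n2+1) := by
      have hrw : ∀ y ∈ Finset.Ioc k e,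
          (min (l1 + 2*y) (l1 + 2*b2 - b1) + 1 - max (2*y) (b2 - l2 + y)).toNat
            = (k + (n2:ℤ) - y + 1).toNat := by
        intro y hy
        simp only [Finset.mem_Ioc] at hy
        omega
      rw [Finset.sum_congr rfl hrw, show e = k + (n2 : ℤ) by omega]
      exact tri2 n2 k
    rw [hS1, hS4]
    omega
  have keyQ : 2 * (weightMult l1 l2 b1 b2 : ℚ) = (n1:ℚ)*((n1:ℚ)+1) + (n2:ℚ)*((n2:ℚ)+1) := by
    exact_mod_cast congrArg (Nat.cast : ℕ → ℚ) key
  have hW : (weightMult l1 l2 b1 b2 : ℚ) = ((n1:ℚ)*((n1:ℚ)+1) + (n2:ℚ)*((n2:ℚ)+1))/2 := by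
    linarith
  rcases Int.even_or_odd b1 with ⟨c, hc⟩ | ⟨c, hc⟩
  · have hq1 : (n1:ℚ) = (l1:ℚ) + l2 + 1 - c := by
      have h' : (n1 : ℤ) = l1 + l2 + 1 - c := by omega
      exact_mod_cast congrArg (Int.cast : ℤ → ℚ) h'
    have hq2 : (n2:ℚ) = (l1:ℚ) + l2 - c := by
      have h' : (n2 : ℤ) = l1 + l2 - c := by omega
      exact_mod_cast congrArg (Int.cast : ℤ → ℚ) h'
    have hp : (-1 : ℚ)^b1 = 1 := Even.neg_one_zpow ⟨c, hc⟩
    have hb : (b1:ℚ) = (c:ℚ) + c := by exact_mod_cast congrArg (Int.cast : ℤ → ℚ) hc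
    rw [hW, hq1, hq2, hp, hb]
    ring
  · have hq1 : (n1:ℚ) = (l1:ℚ) + l2 - c := by
      have h' : (n1 : ℤ) = l1 + l2 - c := by omega
      exact_mod_cast congrArg (Int.cast : ℤ → ℚ) h'
    have hq2 : (n2:ℚ) = (l1:ℚ) + l2 - c := by
      have h' : (n2 : ℤ) = l1 + l2 - c := by omega
      exact_mod_cast congrArg (Int.cast : ℤ → ℚ) h'
    have hp : (-1 : ℚ)^b1 = -1 := Odd.neg_one_zpow ⟨c, hc⟩
    have hb : (b1:ℚ) = 2*(c:ℚ) + 1 := by exact_mod_cast congrArg (Int.cast : ℤ → ℚ) hc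
    rw [hW, hq1, hq2, hp, hb]
    ring
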